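/- Let A and B be algebras graded by groups G and H respectively, with regular gradings having commutation functions θ and η. Then A ⊗ B is a regularly (G × H)-graded algebra with homogeneous components (A ⊗ B)_{(g,h)} = A_g ⊗ B_h, and its commutation function on commuting pairs satisfies (θ⊗η)((g_1,h_1),(g_2,h_2)) = θ(g_1,g_2)·η(h_1,h_2). -/

import Mathlib

/-- The ordered product of a tuple of elements of a (not necessarily commutative) monoid. -/
def tupProd {M : Type*} [Monoid M] {n : ℕ} (a : Fin n → M) : M := (List.ofFn a).prod

/-- `σ ∈ Sym(ḡ)`: the permutation `σ` is admissible for the tuple `ḡ`, i.e. the products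
`g_1 ⋯ g_n` and `g_{σ(1)} ⋯ g_{σ(n)}` coincide. -/
def Admissible {G : Type*} [Group G] {n : ℕ} (g : Fin n → G) (σ : Equiv.Perm (Fin n)) : Prop :=
  tupProd g = tupProd (g ∘ σ)

/-- `θ` is the commutation function of the regular `G`-grading `Ag` on the `F`-algebra `A`. -/
structure IsRegularGradingWith (F : Type) [Field F] (G : Type) [Group G] [DecidableEq G]
    (A : Type) [Ring A] [Algebra F A] (Ag : G → Submodule F A)
    (θ : ∀ n : ℕ, (Fin n → G) → Equiv.Perm (Fin n) → Fˣ) : Prop where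
  internal : DirectSum.IsInternal Ag
  mul_mem : ∀ g h : G, ∀ a ∈ Ag g, ∀ b ∈ Ag h, a * b ∈ Ag (g * h)
  regular : ∀ (n : ℕ) (g : Fin n → G), ∃ a : Fin n → A,
      (∀ i, a i ∈ Ag (g i)) ∧ tupProd a ≠ 0
  comm : ∀ (n : ℕ) (g : Fin n → G) (σ : Equiv.Perm (Fin n)), Admissible g σ →
      ∀ a : Fin n → A, (∀ i, a i ∈ Ag (g i)) →
        tupProd a = (θ n g σ : F) • tupProd (a ∘ σ)

/-- `θ` is a `G`-commutation function: it satisfies the cocycle condition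
`θ(ḡ,σ)·θ(ḡ^σ,τ) = θ(ḡ,στ)` and (equivalently to the substitution and multiplicativity
conditions of Lemma 2.6 of Aljadeff–David) it is realized as the commutation function of a
regular `G`-grading on some `F`-algebra. -/
def IsGCommFunction (F : Type) [Field F] (G : Type) [Group G] [DecidableEq G]
    (θ : ∀ n : ℕ, (Fin n → G) → Equiv.Perm (Fin n) → Fˣ) : Prop :=
  (∀ (n : ℕ) (g : Fin n → G) (σ τ : Equiv.Perm (Fin n)),
      Admissible g σ → Admissible (g ∘ σ) τ →
      θ n g σ * θ n (g ∘ σ) τ = θ n g (σ * τ)) ∧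
  ∃ (A : Type) (_ : Ring A) (_ : Algebra F A) (Ag : G → Submodule F A),
    IsRegularGradingWith F G A Ag θ

/-- `θ(g,h)` for commuting `g, h`: the value of `θ` on the pair `(g,h)` with the
transposition `(1 2)`. -/
def pairTheta {F : Type} [Field F] {G : Type} [Group G]
    (θ : ∀ n : ℕ, (Fin n → G) → Equiv.Perm (Fin n) → Fˣ) (g h : G) : Fˣ :=
  θ 2 ![g, h] (Equiv.swap 0 1)

open scoped TensorProduct DirectSum

/-- The `(g,h)`-homogeneous component `A_g ⊗ B_h` of `A ⊗ B`. -/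
noncomputable def tensorComponent {F : Type} [Field F] {A B : Type} [Ring A] [Algebra F A]
    [Ring B] [Algebra F B] (p : Submodule F A) (q : Submodule F B) :
    Submodule F (A ⊗[F] B) :=
  LinearMap.range (TensorProduct.map p.subtype q.subtype)

/-! ### Auxiliary lemmas -/

theorem tupProd_succ {M : Type*} [Monoid M] {n : ℕ} (a : Fin (n+1) → M) :
    tupProd a = a 0 * tupProd (fun i => a i.succ) := by
  simp [tupProd, List.ofFn_succ]

theorem tupProd_map {M N : Type*} [Monoid M] [Monoid N] (f : M →* N) {n : ℕ} (a : Fin n → M) :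
    tupProd (fun i => f (a i)) = f (tupProd a) := by
  rw [tupProd, tupProd, map_list_prod, List.map_ofFn]; rfl

theorem tupProd_tmul {F : Type} [Field F] {A B : Type} [Ring A] [Algebra F A] [Ring B]
    [Algebra F B] {n : ℕ} (x : Fin n → A) (y : Fin n → B) :
    tupProd (fun i => x i ⊗ₜ[F] y i) = tupProd x ⊗ₜ[F] tupProd y := by
  induction n with
  | zero => simp [tupProd, Algebra.TensorProduct.one_def]
  | succ n ih =>
      rw [tupProd_succ, tupProd_succ x, tupProd_succ y, ih,
        Algebra.TensorProduct.tmul_mul_tmul]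

theorem tmul_ne_zero' {F : Type} [Field F] {A B : Type} [AddCommGroup A] [Module F A]
    [AddCommGroup B] [Module F B] {a : A} {b : B} (ha : a ≠ 0) (hb : b ≠ 0) :
    a ⊗ₜ[F] b ≠ (0 : A ⊗[F] B) := by
  obtain ⟨f, hf⟩ : ∃ f : Module.Dual F A, f a ≠ 0 := by
    by_contra h; push_neg at h
    exact ha ((Module.forall_dual_apply_eq_zero_iff F a).1 h)
  obtain ⟨g, hg⟩ : ∃ g : Module.Dual F B, g b ≠ 0 := by
    by_contra h; push_neg at h
    exact hb ((Module.forall_dual_apply_eq_zero_iff F b).1 h)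
  intro h
  have h2 := congrArg (fun z => TensorProduct.lid F F (TensorProduct.map f g z)) h
  simp only [TensorProduct.map_tmul, TensorProduct.lid_tmul, map_zero, smul_eq_mul] at h2
  exact mul_ne_zero hf hg h2

theorem multilinear_eq_on_span {F : Type} [Field F] {M N : Type} [AddCommMonoid M] [Module F M]
    [AddCommMonoid N] [Module F N] {n : ℕ}
    (f g : MultilinearMap F (fun _ : Fin n => M) N) (s : Fin n → Set M)
    (h : ∀ a : Fin n → M, (∀ i, a i ∈ s i) → f a = g a)
    (a : Fin n → M) (ha : ∀ i, a i ∈ Submodule.span F (s i)) : f a = g a := by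
  suffices H : ∀ t : Finset (Fin n), ∀ a : Fin n → M,
      (∀ i ∈ t, a i ∈ Submodule.span F (s i)) → (∀ i ∉ t, a i ∈ s i) → f a = g a by
    exact H Finset.univ a (fun i _ => ha i) (fun i hi => absurd (Finset.mem_univ i) hi)
  intro t
  induction t using Finset.induction with
  | empty => intro a _ h2; exact h a fun i => h2 i (Finset.notMem_empty i)
  | @insert j t hj ih =>
    intro a h1 h2
    have hx : a j ∈ Submodule.span F (s j) := h1 j (Finset.mem_insert_self j t)
    have key : ∀ x ∈ Submodule.span F (s j),
        f (Function.update a j x) = g (Function.update a j x) := by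
      intro x hxx
      induction hxx using Submodule.span_induction with
      | mem y hy =>
        refine ih (Function.update a j y) (fun i hi => ?_) (fun i hi => ?_)
        · have hij : i ≠ j := fun e => hj (e ▸ hi)
          rw [Function.update_of_ne hij]
          exact h1 i (Finset.mem_insert_of_mem hi)
        · rcases eq_or_ne i j with rfl | hij
          · rwa [Function.update_self]
          · rw [Function.update_of_ne hij]
            exact h2 i (by simp [hij, hi])
      | zero => rw [f.map_update_zero, g.map_update_zero]
      | add x y _ _ hfx hfy =>
        rw [f.map_update_add, g.map_update_add, hfx, hfy]
      | smul c x _ hfx =>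
        rw [f.map_update_smul, g.map_update_smul, hfx]
    have := key (a j) hx
    rwa [Function.update_eq_self] at this

section internal
variable {F : Type} [Field F] {G H : Type} [DecidableEq G] [DecidableEq H]
    {A B : Type} [Ring A] [Algebra F A] [Ring B] [Algebra F B]
    (Ag : G → Submodule F A) (Bh : H → Submodule F B)

theorem map_subtype_injective (p : Submodule F A) (q : Submodule F B) :
    Function.Injective (TensorProduct.map p.subtype q.subtype) := by
  rw [← LinearMap.lTensor_comp_rTensor]
  exact (Module.Flat.lTensor_preserves_injective_linearMap _ q.injective_subtype).comp
    (Module.Flat.rTensor_preserves_injective_linearMap _ p.injective_subtype)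

theorem tensor_isInternal (hA : DirectSum.IsInternal Ag) (hB : DirectSum.IsInternal Bh) :
    DirectSum.IsInternal (fun p : G × H => tensorComponent (Ag p.1) (Bh p.2)) := by
  classical
  let ρ : ∀ p : G × H, (↥(Ag p.1) ⊗[F] ↥(Bh p.2)) ≃ₗ[F]
      tensorComponent (Ag p.1) (Bh p.2) := fun p =>
    LinearEquiv.ofBijective (TensorProduct.map (Ag p.1).subtype (Bh p.2).subtype).rangeRestrict
      ⟨fun x y hxy => map_subtype_injective _ _ (congrArg Subtype.val hxy),
        (TensorProduct.map (Ag p.1).subtype (Bh p.2).subtype).surjective_rangeRestrict⟩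
  let Dequiv : (⨁ (p : G × H), (↥(Ag p.1) ⊗[F] ↥(Bh p.2))) ≃ₗ[F]
      (⨁ (p : G × H), tensorComponent (Ag p.1) (Bh p.2)) :=
    DFinsupp.mapRange.linearEquiv ρ
  let eA : (⨁ g, Ag g) ≃ₗ[F] A := LinearEquiv.ofBijective (DirectSum.coeLinearMap Ag) hA
  let eB : (⨁ h, Bh h) ≃ₗ[F] B := LinearEquiv.ofBijective (DirectSum.coeLinearMap Bh) hB
  let Φ : (⨁ (p : G × H), (↥(Ag p.1) ⊗[F] ↥(Bh p.2))) ≃ₗ[F]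
      A ⊗[F] B :=
    (TensorProduct.directSum F F (fun g => (Ag g : Submodule F A))
      (fun h => (Bh h : Submodule F B))).symm.trans (TensorProduct.congr eA eB)
  have key : (DirectSum.coeLinearMap (fun p : G × H => tensorComponent (Ag p.1) (Bh p.2))).comp
      Dequiv.toLinearMap = Φ.toLinearMap := by
    refine DirectSum.linearMap_ext F fun p => ?_
    refine TensorProduct.ext' fun a b => ?_
    simp only [LinearMap.comp_apply, LinearEquiv.coe_toLinearMap, LinearEquiv.coe_coe]
    have h1 : Dequiv (DirectSum.lof F (G × H) _ p (a ⊗ₜ[F] b)) =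
        DirectSum.lof F (G × H) _ p (ρ p (a ⊗ₜ[F] b)) := by
      exact DFinsupp.mapRange_single (hf := fun i => (ρ i).map_zero)
    rw [h1, DirectSum.lof_eq_of, DirectSum.coeLinearMap_of]
    have h2 : Φ (DirectSum.lof F (G × H) _ p (a ⊗ₜ[F] b)) = (a : A) ⊗ₜ[F] (b : B) := by
      simp only [Φ, LinearEquiv.trans_apply]
      rw [TensorProduct.directSum_symm_lof_tmul]
      simp [eA, eB, TensorProduct.congr_tmul, DirectSum.lof_eq_of, DirectSum.coeLinearMap_of,
          LinearEquiv.ofBijective_apply]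
      exact congrArg₂ (fun (x : A) (y : B) => x ⊗ₜ[F] y) (DirectSum.coeLinearMap_of Ag p.1 a)
        (DirectSum.coeLinearMap_of Bh p.2 b)
    rw [h2]
    rfl
  have hbij : Function.Bijective
      (DirectSum.coeLinearMap (fun p : G × H => tensorComponent (Ag p.1) (Bh p.2))) := by
    have heq : ⇑(DirectSum.coeLinearMap (fun p : G × H => tensorComponent (Ag p.1) (Bh p.2))) =
        ⇑Φ ∘ ⇑Dequiv.symm := by
      funext x
      have := LinearMap.congr_fun key (Dequiv.symm x)
      simpa using this
    rw [heq]
    exact Φ.bijective.comp Dequiv.symm.bijective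
  exact hbij

theorem tensorComponent_eq_span (p : Submodule F A) (q : Submodule F B) :
    tensorComponent p q =
      Submodule.span F (Set.image2 (fun (x : A) (y : B) => x ⊗ₜ[F] y) (p : Set A) (q : Set B)) :=
  (TensorProduct.range_mapIncl p q).trans (Submodule.map₂_eq_span_image2 _ p q)

theorem tmul_mem_tensorComponent {p : Submodule F A} {q : Submodule F B} {x : A} {y : B}
    (hx : x ∈ p) (hy : y ∈ q) : x ⊗ₜ[F] y ∈ tensorComponent p q :=
  ⟨(⟨x, hx⟩ : p) ⊗ₜ[F] (⟨y, hy⟩ : q), by simp [TensorProduct.map_tmul]⟩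

theorem tensorComponent_mul_mem {p1 p2 p3 : Submodule F A} {q1 q2 q3 : Submodule F B}
    (hp : ∀ a ∈ p1, ∀ a' ∈ p2, a * a' ∈ p3) (hq : ∀ b ∈ q1, ∀ b' ∈ q2, b * b' ∈ q3) :
    ∀ u ∈ tensorComponent p1 q1, ∀ v ∈ tensorComponent p2 q2,
      u * v ∈ tensorComponent p3 q3 := by
  intro u hu v hv
  rw [tensorComponent_eq_span] at hu hv
  induction hu using Submodule.span_induction with
  | mem x hx =>
    induction hv using Submodule.span_induction with
    | mem y hy =>
      obtain ⟨a, ha, b, hb, rfl⟩ := hx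
      obtain ⟨a', ha', b', hb', rfl⟩ := hy
      rw [Algebra.TensorProduct.tmul_mul_tmul]
      exact tmul_mem_tensorComponent (hp a ha a' ha') (hq b hb b' hb')
    | zero => rw [mul_zero]; exact (tensorComponent p3 q3).zero_mem
    | add y z _ _ h1 h2 => rw [mul_add]; exact (tensorComponent p3 q3).add_mem h1 h2
    | smul c y _ h1 => rw [Algebra.mul_smul_comm]; exact (tensorComponent p3 q3).smul_mem c h1
  | zero => rw [zero_mul]; exact (tensorComponent p3 q3).zero_mem
  | add y z _ _ h1 h2 => rw [add_mul]; exact (tensorComponent p3 q3).add_mem h1 h2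
  | smul c y _ h1 => rw [Algebra.smul_mul_assoc]; exact (tensorComponent p3 q3).smul_mem c h1

end internal

section adm
variable {G H : Type} [Group G] [Group H]

theorem Admissible.fst' {n : ℕ} {g : Fin n → G × H} {σ : Equiv.Perm (Fin n)}
    (h : Admissible g σ) : Admissible (fun i => (g i).1) σ := by
  unfold Admissible at h ⊢
  show tupProd (fun i => (MonoidHom.fst G H) (g i)) =
      tupProd (fun i => (MonoidHom.fst G H) ((g ∘ σ) i))
  rw [tupProd_map, tupProd_map, h]

theorem Admissible.snd' {n : ℕ} {g : Fin n → G × H} {σ : Equiv.Perm (Fin n)}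
    (h : Admissible g σ) : Admissible (fun i => (g i).2) σ := by
  unfold Admissible at h ⊢
  show tupProd (fun i => (MonoidHom.snd G H) (g i)) =
      tupProd (fun i => (MonoidHom.snd G H) ((g ∘ σ) i))
  rw [tupProd_map, tupProd_map, h]

end adm

theorem tensor_regular_grading (F : Type) [Field F] (G H : Type) [Group G] [Group H]
    [DecidableEq G] [DecidableEq H]
    (A B : Type) [Ring A] [Algebra F A] [Ring B] [Algebra F B]
    (Ag : G → Submodule F A) (Bh : H → Submodule F B)
    (θ : ∀ n : ℕ, (Fin n → G) → Equiv.Perm (Fin n) → Fˣ)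
    (η : ∀ n : ℕ, (Fin n → H) → Equiv.Perm (Fin n) → Fˣ)
    (hA : IsRegularGradingWith F G A Ag θ) (hB : IsRegularGradingWith F H B Bh η) :
    ∃ ξ : ∀ n : ℕ, (Fin n → G × H) → Equiv.Perm (Fin n) → Fˣ,
      IsRegularGradingWith F (G × H) (A ⊗[F] B)
        (fun p => tensorComponent (Ag p.1) (Bh p.2)) ξ ∧
      ∀ p q : G × H, Commute p q →
        pairTheta ξ p q = pairTheta θ p.1 q.1 * pairTheta η p.2 q.2 := by
  classical
  refine ⟨fun n g σ => θ n (fun i => (g i).1) σ * η n (fun i => (g i).2) σ, ⟨?_, ?_, ?_, ?_⟩, ?_⟩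
  · exact tensor_isInternal Ag Bh hA.internal hB.internal
  · rintro ⟨g1, h1⟩ ⟨g2, h2⟩ u hu v hv
    exact tensorComponent_mul_mem (hA.mul_mem g1 g2) (hB.mul_mem h1 h2) u hu v hv
  · intro n g
    obtain ⟨x, hx, hxp⟩ := hA.regular n (fun i => (g i).1)
    obtain ⟨y, hy, hyp⟩ := hB.regular n (fun i => (g i).2)
    refine ⟨fun i => x i ⊗ₜ[F] y i, fun i => tmul_mem_tensorComponent (hx i) (hy i), ?_⟩
    rw [tupProd_tmul]
    exact tmul_ne_zero' hxp hyp
  · intro n g σ hσ c hc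
    set P : MultilinearMap F (fun _ : Fin n => A ⊗[F] B) (A ⊗[F] B) :=
      MultilinearMap.mkPiAlgebraFin F n (A ⊗[F] B) with hP
    set cξ : F := ((θ n (fun i => (g i).1) σ * η n (fun i => (g i).2) σ : Fˣ) : F) with hcξ
    set Q : MultilinearMap F (fun _ : Fin n => A ⊗[F] B) (A ⊗[F] B) :=
      cξ • P.domDomCongr σ with hQ
    have main : P c = Q c := by
      apply multilinear_eq_on_span P Q
        (fun i => Set.image2 (fun (x : A) (y : B) => x ⊗ₜ[F] y)
          (Ag (g i).1 : Set A) (Bh (g i).2 : Set B))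
      · intro a ha
        have hmem : ∀ i, ∃ x ∈ Ag (g i).1, ∃ y ∈ Bh (g i).2, x ⊗ₜ[F] y = a i := fun i => ha i
        choose x hx y hy hxy using hmem
        have hax : a = fun i => x i ⊗ₜ[F] y i := funext fun i => (hxy i).symm
        subst hax
        have hPa : ∀ b : Fin n → A ⊗[F] B, P b = tupProd b := fun b => rfl
        have hθ := hA.comm n (fun i => (g i).1) σ hσ.fst' x hx
        have hη := hB.comm n (fun i => (g i).2) σ hσ.snd' y hy
        rw [hPa, tupProd_tmul, hθ, hη, ← TensorProduct.smul_tmul', TensorProduct.tmul_smul,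
          smul_smul]
        have hQa : Q (fun i => x i ⊗ₜ[F] y i) =
            cξ • tupProd (fun i => x (σ i) ⊗ₜ[F] y (σ i)) := rfl
        rw [hQa, tupProd_tmul]
        have : tupProd (x ∘ σ) ⊗ₜ[F] tupProd (y ∘ σ) =
            tupProd (fun i => x (σ i)) ⊗ₜ[F] tupProd (fun i => y (σ i)) := rfl
        rw [this, hcξ]
        push_cast
        rfl
      · intro i
        have := hc i
        rwa [tensorComponent_eq_span] at this
    have hPc : P c = tupProd c := rfl
    have hQc : Q c = cξ • tupProd (c ∘ σ) := rfl
    rw [← hPc, main, hQc, hcξ]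
  · intro p q _
    have e1 : (fun i => ((![p, q] : Fin 2 → G × H) i).1) = ![p.1, q.1] := by
      funext i; fin_cases i <;> rfl
    have e2 : (fun i => ((![p, q] : Fin 2 → G × H) i).2) = ![p.2, q.2] := by
      funext i; fin_cases i <;> rfl
    show θ 2 _ _ * η 2 _ _ = _
    rw [e1, e2]
    rfl
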